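/- There is a constant C > 0 such that for all η, σ ∈ ℝ², |(η+σ)/⟨η+σ⟩ − σ/⟨σ⟩| ≥ C |η| / ( max(⟨η+σ⟩, ⟨σ⟩) · min(⟨η+σ⟩, ⟨σ⟩)² ). -/

import Mathlib

set_option maxHeartbeats 1000000

open MeasureTheory Real
open RealInnerProductSpace
open scoped FourierTransform ENNReal

noncomputable section

abbrev E2 := EuclideanSpace ℝ (Fin 2)

/-- Japanese bracket `⟨x⟩ = (1+|x|²)^{1/2}`. -/
def jap (x : E2) : ℝ := Real.sqrt (1 + ‖x‖^2)

lemma jap_sq (x : E2) : (jap x)^2 = 1 + ‖x‖^2 := Real.sq_sqrt (by positivity)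

lemma one_le_jap (x : E2) : 1 ≤ jap x := by
  have h1 := jap_sq x
  have h2 : 0 ≤ jap x := Real.sqrt_nonneg _
  nlinarith [sq_nonneg (‖x‖ : ℝ)]


lemma chain (d N S P q A B : ℝ) (hd0 : 0 ≤ d) (hS0 : 0 < S)
    (hA0 : 0 < A) (hB0 : 0 < B)
    (hid : P * q^2 = S^2) (hD0 : 0 ≤ P) (hle : q^2 ≤ 16*A^2*B^2)
    (c1 : d*P ≤ N*S) (hx : A^2 ≤ S) :
    d ≤ 16*B^2*N := by
  have s4 : S^2 ≤ 16*A^2*B^2*P := by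
    nlinarith [mul_le_mul_of_nonneg_left hle hD0, hid]
  have c2 : d*S^2 ≤ 16*A^2*B^2*(d*P) := by
    nlinarith [mul_le_mul_of_nonneg_left s4 hd0]
  have c3 : 16*A^2*B^2*(d*P) ≤ 16*A^2*B^2*(N*S) :=
    mul_le_mul_of_nonneg_left c1 (by positivity)
  have c4 : A^2*S*d ≤ d*S^2 := by
    nlinarith [mul_nonneg (mul_nonneg hd0 hS0.le) (sub_nonneg.mpr hx)]
  have c5 : A^2*S*d ≤ A^2*S*(16 * B^2 * N) := by
    calc A^2*S*d ≤ d*S^2 := c4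
    _ ≤ 16*A^2*B^2*(d*P) := c2
    _ ≤ 16*A^2*B^2*(N*S) := c3
    _ = A^2*S*(16 * B^2 * N) := by ring
  exact le_of_mul_le_mul_left c5 (by positivity)

lemma key (A B na nb t : ℝ) (hA : 1 ≤ A) (hB : 1 ≤ B)
    (hna : na^2 = A^2 - 1) (hnb : nb^2 = B^2 - 1)
    (hna0 : 0 ≤ na) (hnb0 : 0 ≤ nb)
    (ht : t ≤ na*nb) :
    na^2 + nb^2 - 2*t ≤ 16 * B^2 * (B^2*na^2 + A^2*nb^2 - 2*(A*B)*t) := by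
  have hA0 : (0:ℝ) < A := by linarith
  have hB0 : (0:ℝ) < B := by linarith
  have hab1 : (1:ℝ) ≤ A*B := by nlinarith
  have hAB1 : (0:ℝ) ≤ A*B + 1 := by linarith
  have naA : na ≤ A := by nlinarith
  have nbB : nb ≤ B := by nlinarith
  have hd0 : 0 ≤ na^2 + nb^2 - 2*t := by nlinarith [sq_nonneg (na - nb)]
  have hdiff : na^2 - nb^2 = A^2 - B^2 := by rw [hna, hnb]; ring
  have s2eq : (A-B)^2*(A+B)^2 = (na-nb)^2*(na+nb)^2 := by
    linear_combination (-(A^2 - B^2 + na^2 - nb^2)) * hdiff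
  have hsub : (na-nb)^2 ≤ na^2 + nb^2 - 2*t := by nlinarith
  have s2 : (A-B)^2*(A+B)^2 ≤ (na^2 + nb^2 - 2*t)*(na+nb)^2 := by
    rw [s2eq]
    exact mul_le_mul_of_nonneg_right hsub (sq_nonneg _)
  have h1 : (A*B+1 - na*nb) * (A*B+1+na*nb) = (A+B)^2 := by
    linear_combination (-(nb^2))*hna + (-(A^2-1))*hnb
  have hid : (A*B*(A+B)^2 - (A*B+1)*(na+nb)^2) * (A*B+1+na*nb)^2 = ((A+B)^2)^2 := by
    have hD2 : A*B*(A+B)^2 - (A*B+1)*(na+nb)^2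
        = 2*(A*B+1)*(A*B+1 - na*nb) - (A+B)^2 := by
      linear_combination (-(A*B+1))*hna + (-(A*B+1))*hnb
    rw [hD2]
    linear_combination (2*(A*B+1)*(A*B+1+na*nb) + (A+B)^2) * h1
  have hqp : (0:ℝ) < (A*B+1+na*nb)^2 := by positivity
  have hD0 : 0 ≤ A*B*(A+B)^2 - (A*B+1)*(na+nb)^2 := by
    have h := (eq_div_iff hqp.ne').mpr hid
    rw [h]
    positivity
  have hw : na*nb ≤ A*B := mul_le_mul naA nbB hnb0 hA0.le
  have hq0 : (0:ℝ) ≤ A*B+1+na*nb := by positivity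
  have hp3 : A*B+1+na*nb ≤ 4*(A*B) := by linarith
  have hle : (A*B+1+na*nb)^2 ≤ 16*A^2*B^2 := by
    nlinarith [mul_self_le_mul_self hq0 hp3]
  have e1 : (B^2*na^2 + A^2*nb^2 - 2*(A*B)*t)*(A+B)^2
      - (na^2 + nb^2 - 2*t)*(A*B*(A+B)^2 - (A*B+1)*(na+nb)^2)
      = (A*B+1)*((na^2 + nb^2 - 2*t)*(na+nb)^2 - (A-B)^2*(A+B)^2) := by
    linear_combination ((A+B)^2*(B*(B-A)))*hna + ((A+B)^2*(A*(A-B)))*hnb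
  have c1 : (na^2 + nb^2 - 2*t)*(A*B*(A+B)^2 - (A*B+1)*(na+nb)^2)
      ≤ (B^2*na^2 + A^2*nb^2 - 2*(A*B)*t)*(A+B)^2 := by
    nlinarith [mul_nonneg hAB1 (sub_nonneg.mpr s2), e1]
  have hx : A^2 ≤ (A+B)^2 := by nlinarith
  exact chain _ _ _ _ _ A B hd0 (by positivity) hA0 hB0 hid hD0 hle c1 hx

theorem stmt2 : ∃ C > (0:ℝ), ∀ η σ : E2,
    ‖(jap (η + σ))⁻¹ • (η + σ) - (jap σ)⁻¹ • σ‖ ≥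
      C * ‖η‖ / (max (jap (η + σ)) (jap σ) * (min (jap (η + σ)) (jap σ))^2) := by
  refine ⟨1/4, by norm_num, fun η σ => ?_⟩
  have hA1 : 1 ≤ jap (η + σ) := one_le_jap _
  have hB1 : 1 ≤ jap σ := one_le_jap _
  have hA0 : (0:ℝ) < jap (η + σ) := by linarith
  have hB0 : (0:ℝ) < jap σ := by linarith
  have hA2 : ‖η + σ‖^2 = (jap (η + σ))^2 - 1 := by rw [jap_sq]; ring
  have hB2 : ‖σ‖^2 = (jap σ)^2 - 1 := by rw [jap_sq]; ring
  have ht : (inner ℝ (η + σ) σ : ℝ) ≤ ‖η + σ‖ * ‖σ‖ := real_inner_le_norm _ _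
  have hη : ‖η‖^2 = ‖η + σ‖^2 + ‖σ‖^2 - 2*(inner ℝ (η + σ) σ : ℝ) := by
    have h : ‖(η + σ) - σ‖^2 = ‖η + σ‖^2 - 2*(inner ℝ (η + σ) σ : ℝ) + ‖σ‖^2 :=
      norm_sub_sq_real _ _
    rw [add_sub_cancel_right] at h
    linarith
  have e1 : ‖(jap (η + σ))⁻¹ • (η + σ) - (jap σ)⁻¹ • σ‖^2
      = ((jap (η + σ))⁻¹*‖η + σ‖)^2 - 2*((jap (η + σ))⁻¹*((jap σ)⁻¹*(inner ℝ (η + σ) σ : ℝ)))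
        + ((jap σ)⁻¹*‖σ‖)^2 := by
    rw [@norm_sub_sq_real, norm_smul, norm_smul, real_inner_smul_left,
      real_inner_smul_right, Real.norm_eq_abs, Real.norm_eq_abs,
      abs_of_pos (inv_pos.mpr hA0), abs_of_pos (inv_pos.mpr hB0)]
  have hL : (jap (η + σ) * jap σ)^2 * ‖(jap (η + σ))⁻¹ • (η + σ) - (jap σ)⁻¹ • σ‖^2
      = (jap σ)^2*‖η + σ‖^2 + (jap (η + σ))^2*‖σ‖^2
        - 2*(jap (η + σ) * jap σ)*(inner ℝ (η + σ) σ : ℝ) := by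
    rw [e1]; field_simp; ring
  rw [ge_iff_le]
  apply le_of_pow_le_pow_left₀ two_ne_zero (norm_nonneg _)
  set A := jap (η + σ)
  set B := jap σ
  set L := ‖(jap (η + σ))⁻¹ • (η + σ) - (jap σ)⁻¹ • σ‖^2 with hLdef
  rcases le_total B A with h | h
  · rw [max_eq_left h, min_eq_right h]
    have hk := key A B ‖η + σ‖ ‖σ‖ (inner ℝ (η + σ) σ : ℝ) hA1 hB1 hA2 hB2
      (norm_nonneg _) (norm_nonneg _) ht
    have hL2 : 16*B^2*((A*B)^2*L)
        = 16*B^2*((B^2*‖η + σ‖^2 + A^2*‖σ‖^2 - 2*(A*B)*(inner ℝ (η + σ) σ : ℝ))) := by rw [hL]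
    have hgoal : ‖η‖^2 ≤ 16*A^2*B^4*L := by linarith
    rw [div_pow, div_le_iff₀ (by positivity)]
    linarith [hgoal]
  · rw [max_eq_right h, min_eq_left h]
    have hk := key B A ‖σ‖ ‖η + σ‖ (inner ℝ (η + σ) σ : ℝ) hB1 hA1 hB2 hA2
      (norm_nonneg _) (norm_nonneg _) (by rw [mul_comm] at ht; exact ht)
    have hL2 : 16*A^2*((A*B)^2*L)
        = 16*A^2*((B^2*‖η + σ‖^2 + A^2*‖σ‖^2 - 2*(A*B)*(inner ℝ (η + σ) σ : ℝ))) := by rw [hL]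
    have hgoal : ‖η‖^2 ≤ 16*B^2*A^4*L := by nlinarith [hk, hL2, hη]
    rw [div_pow, div_le_iff₀ (by positivity)]
    linarith [hgoal]

end
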